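/- Let G be a Polish group. Every Roelcke precompact subset of G is coarsely bounded; that is, if A ⊆ G satisfies that for every neighborhood V of the identity there is a finite F ⊆ G with A ⊆ VFV, then every continuous left-invariant pseudometric on G assigns finite diameter to A. -/

import Mathlib

open scoped Pointwise

/-- A subset `A` of a topological group `G` is *Roelcke precompact* if for every
neighborhood `V` of the identity there is a finite set `F ⊆ G` with `A ⊆ V * F * V`,
where `V * F * V = {v * f * w : v, w ∈ V, f ∈ F}`. -/
def RoelckePrecompact {G : Type*} [Group G] [TopologicalSpace G] (A : Set G) : Prop :=
  ∀ V ∈ nhds (1 : G), ∃ F : Finset G, A ⊆ V * (F : Set G) * V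

/-- A subset `A` of a topological group is *coarsely bounded* if every continuous
left-invariant pseudometric on `G` assigns finite diameter to `A`. -/
def IsCoarselyBounded {G : Type*} [Group G] [TopologicalSpace G] (A : Set G) : Prop :=
  ∀ d : G → G → ℝ,
    Continuous (fun p : G × G => d p.1 p.2) →
    (∀ x, d x x = 0) → (∀ x y, d x y = d y x) → (∀ x y z, d x z ≤ d x y + d y z) →
    (∀ g x y, d (g * x) (g * y) = d x y) →
    ∃ C : ℝ, ∀ x ∈ A, ∀ y ∈ A, d x y ≤ C

/-- In a Polish group, every Roelcke precompact subset is coarsely bounded: every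
continuous left-invariant pseudometric assigns it finite diameter. -/
theorem roelckePrecompact_isCoarselyBounded
    {G : Type*} [Group G] [TopologicalSpace G] [IsTopologicalGroup G] [PolishSpace G]
    (A : Set G) (hA : RoelckePrecompact A) : IsCoarselyBounded A := by
  intro d hcont hrefl hsymm htri hinv
  -- V = open ball of radius 1 around the identity
  set V : Set G := {g | d 1 g < 1} with hV
  have hVopen : IsOpen V := by
    have : Continuous fun g : G => d 1 g :=
      hcont.comp (continuous_const.prodMk continuous_id)
    exact isOpen_lt this continuous_const
  have hVnhds : V ∈ nhds (1 : G) :=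
    hVopen.mem_nhds (by simp [hV, hrefl])
  obtain ⟨F, hF⟩ := hA V hVnhds
  -- bound the values d 1 f for f ∈ F
  obtain ⟨M, hM⟩ : ∃ M : ℝ, ∀ f ∈ F, d 1 f ≤ M := by
    obtain ⟨M, hM⟩ := (F.image (d 1)).exists_le
    exact ⟨M, fun f hf => hM _ (Finset.mem_image_of_mem _ hf)⟩
  -- every x ∈ A satisfies d 1 x ≤ 2 + M
  have key : ∀ x ∈ A, d 1 x ≤ 2 + M := by
    intro x hx
    obtain ⟨a, ha, w, hw, rfl⟩ := hF hx
    obtain ⟨v, hv, f, hf, rfl⟩ := ha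
    have h1 : d 1 (v * f * w) ≤ d 1 v + d 1 (f * w) := by
      have := htri 1 v (v * (f * w))
      have h2 : d v (v * (f * w)) = d 1 (f * w) := by
        have := hinv v 1 (f * w); simpa using this
      rw [h2] at this
      simpa [mul_assoc] using this
    have h3 : d 1 (f * w) ≤ d 1 f + d 1 w := by
      have := htri 1 f (f * w)
      have h4 : d f (f * w) = d 1 w := by
        have := hinv f 1 w; simpa using this
      rw [h4] at this; exact this
    have hvlt : d 1 v < 1 := hv
    have hwlt : d 1 w < 1 := hw
    have hfle : d 1 f ≤ M := hM f hf
    calc d 1 (v * f * w) ≤ d 1 v + d 1 (f * w) := h1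
      _ ≤ d 1 v + (d 1 f + d 1 w) := by linarith
      _ ≤ 2 + M := by linarith
  refine ⟨(2 + M) + (2 + M), fun x hx y hy => ?_⟩
  have := htri x 1 y
  have hx1 : d x 1 = d 1 x := hsymm x 1
  rw [hx1] at this
  have := this
  have h1 := key x hx
  have h2 := key y hy
  linarith
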